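/- Let R be a domain with quotient field Q, and let F = ⊕_{η∈S} R·e_η with |S| ≥ 2 and distinguished element ⊥ ∈ S. Let p₀, p₁ be comaximal primes of R. Suppose M is an R-module with F ⊆ M ⊆ Q ⊗ F, such that M contains p₀^{-∞}F₀ and p₁^{-∞}F₁ where F₁ = R·e_⊥ and F₀ = span{e_η − e_η' : η,η' ∈ S}. If φ is an R-endomorphism of M that is multiplication by some q ∈ Q and satisfies (p_i^{-∞}F_i)φ ⊆ p_i^{-∞}F_i for i = 0,1, then q ∈ R. -/

import Mathlib

/-- If `M` with `F ⊆ M ⊆ Q ⊗ F` contains `p₀^{-∞}F₀` and `p₁^{-∞}F₁`, and the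
endomorphism `φ` of `M` is multiplication by `q ∈ Q` and preserves both
`p₀^{-∞}F₀` and `p₁^{-∞}F₁`, then `q ∈ R`. -/
theorem stmt8 (R Q : Type*) [CommRing R] [IsDomain R] [Field Q] [Algebra R Q]
    [IsFractionRing R Q] (S : Type*) (bot : S) (hS : ∃ η : S, η ≠ bot)
    (p₀ p₁ : R) (h₀ : Prime p₀) (h₁ : Prime p₁) (hco : IsCoprime p₀ p₁)
    (F₀ F₁ M : Submodule R (S →₀ Q))
    (hF₀ : F₀ = Submodule.span R {x : S →₀ Q |
      ∃ η η' : S, x = Finsupp.single η (1 : Q) - Finsupp.single η' 1})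
    (hF₁ : F₁ = Submodule.span R {Finsupp.single bot (1 : Q)})
    (hFM : ∀ η : S, Finsupp.single η (1 : Q) ∈ M)
    (hM0 : {v : S →₀ Q | ∃ n : ℕ, algebraMap R Q (p₀ ^ n) • v ∈ F₀} ⊆ (M : Set (S →₀ Q)))
    (hM1 : {v : S →₀ Q | ∃ n : ℕ, algebraMap R Q (p₁ ^ n) • v ∈ F₁} ⊆ (M : Set (S →₀ Q)))
    (φ : M →ₗ[R] M) (q : Q)
    (hφ : ∀ m : M, ((φ m : M) : S →₀ Q) = q • (m : S →₀ Q))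
    (hinv0 : ∀ m : M, (m : S →₀ Q) ∈
        {v : S →₀ Q | ∃ n : ℕ, algebraMap R Q (p₀ ^ n) • v ∈ F₀} →
      ((φ m : M) : S →₀ Q) ∈ {v : S →₀ Q | ∃ n : ℕ, algebraMap R Q (p₀ ^ n) • v ∈ F₀})
    (hinv1 : ∀ m : M, (m : S →₀ Q) ∈
        {v : S →₀ Q | ∃ n : ℕ, algebraMap R Q (p₁ ^ n) • v ∈ F₁} →
      ((φ m : M) : S →₀ Q) ∈ {v : S →₀ Q | ∃ n : ℕ, algebraMap R Q (p₁ ^ n) • v ∈ F₁}) :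
    q ∈ Set.range (algebraMap R Q) := by
  obtain ⟨η, hη⟩ := hS
  -- Step 1: q * p₁^n ∈ range for some n
  have hm1mem : (Finsupp.single bot (1 : Q)) ∈
      {v : S →₀ Q | ∃ n : ℕ, algebraMap R Q (p₁ ^ n) • v ∈ F₁} := by
    refine ⟨0, ?_⟩
    simp only [pow_zero, map_one, one_smul, hF₁]
    exact Submodule.subset_span rfl
  set m₁ : M := ⟨Finsupp.single bot 1, hFM bot⟩ with hm₁
  obtain ⟨n, hn⟩ := hinv1 m₁ hm1mem
  rw [hφ m₁] at hn
  rw [hF₁, Submodule.mem_span_singleton] at hn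
  obtain ⟨a, ha⟩ := hn
  have hqa : algebraMap R Q (p₁ ^ n) * q = algebraMap R Q a := by
    have := congrArg (fun f : S →₀ Q => f bot) ha
    simpa [hm₁, Finsupp.smul_apply, Algebra.smul_def, mul_assoc] using this.symm
  -- Step 2: q * p₀^m ∈ range for some m
  have hm0mem : ((Finsupp.single η (1 : Q)) - Finsupp.single bot 1) ∈
      {v : S →₀ Q | ∃ n : ℕ, algebraMap R Q (p₀ ^ n) • v ∈ F₀} := by
    refine ⟨0, ?_⟩
    simp only [pow_zero, map_one, one_smul, hF₀]
    exact Submodule.subset_span ⟨η, bot, rfl⟩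
  set m₀ : M := ⟨Finsupp.single η 1 - Finsupp.single bot 1,
    sub_mem (hFM η) (hFM bot)⟩ with hm₀
  obtain ⟨m, hm⟩ := hinv0 m₀ hm0mem
  rw [hφ m₀] at hm
  -- every element of F₀ has coordinates in the range of algebraMap
  have hcoord : ∀ x ∈ F₀, ∀ s : S, x s ∈ Set.range (algebraMap R Q) := by
    intro x hx s
    rw [hF₀] at hx
    induction hx using Submodule.span_induction with
    | mem y hy =>
      obtain ⟨a, b, rfl⟩ := hy
      classical
      refine ⟨(if a = s then 1 else 0) - (if b = s then 1 else 0), ?_⟩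
      rw [map_sub, Finsupp.sub_apply, Finsupp.single_apply, Finsupp.single_apply]
      split_ifs <;> simp
    | zero => exact ⟨0, by simp⟩
    | add y z _ _ hy hz =>
      obtain ⟨a, ha⟩ := hy; obtain ⟨b, hb⟩ := hz
      exact ⟨a + b, by simp [Finsupp.add_apply, ha, hb]⟩
    | smul r y _ hy =>
      obtain ⟨a, ha⟩ := hy
      exact ⟨r * a, by simp [Finsupp.smul_apply, Algebra.smul_def, ha]⟩
  have hb := hcoord _ hm η
  obtain ⟨b, hb⟩ := hb
  have hqb : algebraMap R Q (p₀ ^ m) * q = algebraMap R Q b := by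
    have : ((algebraMap R Q (p₀ ^ m) •
        (q • ((Finsupp.single η 1 - Finsupp.single bot 1 : S →₀ Q)))) : S →₀ Q) η
        = algebraMap R Q (p₀ ^ m) * q := by
      simp [Finsupp.smul_apply, Finsupp.sub_apply, Finsupp.single_apply, hη.symm,
        Ne.symm hη, smul_eq_mul, mul_assoc]
    rw [← this, ← hb]
  -- Step 3: combine via coprimality
  obtain ⟨u, v, huv⟩ := (hco.pow (m := m) (n := n))
  refine ⟨u * b + v * a, ?_⟩
  have h1 : algebraMap R Q (u * p₀ ^ m + v * p₁ ^ n) = 1 := by rw [huv]; exact map_one _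
  calc algebraMap R Q (u * b + v * a)
      = algebraMap R Q u * (algebraMap R Q (p₀ ^ m) * q)
        + algebraMap R Q v * (algebraMap R Q (p₁ ^ n) * q) := by
        rw [hqa, hqb]; push_cast [map_add, map_mul]; ring
    _ = algebraMap R Q (u * p₀ ^ m + v * p₁ ^ n) * q := by push_cast [map_add, map_mul]; ring
    _ = q := by rw [h1, one_mul]
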